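/- If the monic type II polynomials satisfy x P_n = P_{n+1} + Σ_{j=0}^{r} a_{n,j} P_{n−j}, then the normalized type I vector polynomials satisfy the recurrence x A_n(x) = A_{n−1}(x) + Σ_{j=0}^{r} a_{n+j−1,j} A_{n+j}(x) for n ≥ 1, with A_0 ≡ 0. -/
import Mathlib


open Polynomial

/-- The `j`-th entry of the proper multi-index `ν_n`. -/
def properIndex (r n : ℕ) (j : Fin r) : ℕ := (n + r - 1 - j.val) / r

/-- Type II orthogonality conditions (measures identified with moment functionals). -/
def TypeIISol (r : ℕ) (μ : Fin r → (Polynomial ℂ →ₗ[ℂ] ℂ)) (n : ℕ) (P : Polynomial ℂ) : Prop :=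
  P.degree ≤ (n : WithBot ℕ) ∧ ∀ j : Fin r, ∀ ℓ < properIndex r n j, μ j (X ^ ℓ * P) = 0

/-- The proper multi-index `ν_n` is normal. -/
def NormalIndex (r : ℕ) (μ : Fin r → (Polynomial ℂ →ₗ[ℂ] ℂ)) (n : ℕ) : Prop :=
  (∀ P, TypeIISol r μ n P → P = 0 ∨ P.natDegree = n) ∧
  (∀ P Q, TypeIISol r μ n P → TypeIISol r μ n Q → P ≠ 0 → ∃ c : ℂ, Q = c • P)

/-- Weakly complete system: all proper multi-indices are normal. -/
def WeaklyComplete (r : ℕ) (μ : Fin r → (Polynomial ℂ →ₗ[ℂ] ℂ)) : Prop :=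
  ∀ n, NormalIndex r μ n

/-- The type I multiple orthogonal vector polynomials `A_n = (A_{n,1},…,A_{n,r})`,
with the normalization `∫ x^{n-1} ∑_j A_{n,j}(x) dμ_j(x) = 1`. -/
def TypeINormalized (r : ℕ) (μ : Fin r → (Polynomial ℂ →ₗ[ℂ] ℂ))
    (A : ℕ → Fin r → Polynomial ℂ) : Prop :=
  ∀ n, 1 ≤ n →
    (∀ j : Fin r, (A n j).degree < (properIndex r n j : WithBot ℕ)) ∧
    (∀ ℓ : ℕ, ℓ + 2 ≤ n → ∑ j : Fin r, μ j (X ^ ℓ * A n j) = 0) ∧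
    (∑ j : Fin r, μ j (X ^ (n - 1) * A n j) = 1)


section AuxLemmas

lemma mod_two_r (r x : ℕ) (hx : x < 2 * r) : x % r = if x < r then x else x - r := by
  split
  · exact Nat.mod_eq_of_lt ‹_›
  · rw [Nat.mod_eq_sub_mod (by omega), Nat.mod_eq_of_lt (by omega)]

lemma filter_dvd_eq (r N : ℕ) (hr : 0 < r) :
    Finset.filter (fun j => r ∣ N + 1 + j) (Finset.range r) = {r - 1 - N % r} := by
  have hs : N % r < r := Nat.mod_lt _ hr
  ext j
  simp only [Finset.mem_filter, Finset.mem_range, Finset.mem_singleton,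
    Nat.dvd_iff_mod_eq_zero]
  have hmod : (N + 1 + j) % r = (N % r + 1 + j) % r := by
    conv_lhs => rw [← Nat.div_add_mod N r]
    rw [show r * (N / r) + N % r + 1 + j = r * (N / r) + (N % r + 1 + j) by omega,
      Nat.mul_add_mod]
  rw [hmod]
  constructor
  · rintro ⟨hj, h0⟩
    rw [mod_two_r r _ (by omega)] at h0
    split at h0 <;> omega
  · intro hj
    refine ⟨by omega, ?_⟩
    rw [mod_two_r r _ (by omega)]
    split <;> omega

lemma sum_div_eq (r : ℕ) (hr : 0 < r) (N : ℕ) :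
    ∑ j ∈ Finset.range r, (N + j) / r = N := by
  induction N with
  | zero =>
    refine Finset.sum_eq_zero fun j hj => ?_
    exact Nat.div_eq_of_lt (by simpa using Finset.mem_range.mp hj)
  | succ N ih =>
    have h : ∀ j ∈ Finset.range r, (N + 1 + j) / r
        = (N + j) / r + if r ∣ (N + j + 1) then 1 else 0 := by
      intro j _
      rw [show N + 1 + j = (N + j) + 1 by omega, Nat.succ_div]
    calc ∑ j ∈ Finset.range r, (N + 1 + j) / r
        = ∑ j ∈ Finset.range r, ((N + j) / r + if r ∣ (N + j + 1) then 1 else 0) :=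
          Finset.sum_congr rfl h
      _ = N + 1 := by
          rw [Finset.sum_add_distrib, ih]
          have h2 : (∑ j ∈ Finset.range r, if r ∣ (N + j + 1) then 1 else 0)
              = (Finset.filter (fun j => r ∣ N + 1 + j) (Finset.range r)).card := by
            rw [Finset.card_eq_sum_ones, Finset.sum_filter]
            exact Finset.sum_congr rfl fun j _ => by rw [show N + j + 1 = N + 1 + j by omega]
          rw [h2, filter_dvd_eq r N hr, Finset.card_singleton]

lemma sum_properIndex (r : ℕ) (hr : 0 < r) (N : ℕ) :
    ∑ j : Fin r, properIndex r N j = N := by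
  simp only [properIndex]
  rw [← Finset.sum_range (fun j => (N + r - 1 - j) / r)]
  calc ∑ j ∈ Finset.range r, (N + r - 1 - j) / r
      = ∑ j ∈ Finset.range r, (N + (r - 1 - j)) / r := by
        refine Finset.sum_congr rfl fun j hj => ?_
        have := Finset.mem_range.mp hj
        congr 1
        omega
    _ = ∑ j ∈ Finset.range r, (N + j) / r := Finset.sum_range_reflect (fun j => (N + j) / r) r
    _ = N := sum_div_eq r hr N

lemma properIndex_mono (r : ℕ) {m n : ℕ} (h : m ≤ n) (j : Fin r) :
    properIndex r m j ≤ properIndex r n j :=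
  Nat.div_le_div_right (by omega)

lemma properIndex_add_r (r : ℕ) (hr : 0 < r) (n : ℕ) (j : Fin r) :
    properIndex r (n + r) j = properIndex r n j + 1 := by
  unfold properIndex
  have hj := j.2
  rw [show n + r + r - 1 - j.val = (n + r - 1 - j.val) + r by omega, Nat.add_div_right _ hr]

lemma lin_mul_expand (f : Polynomial ℂ →ₗ[ℂ] ℂ) (Q R : Polynomial ℂ) :
    f (Q * R) = ∑ i ∈ Finset.range (Q.natDegree + 1), Q.coeff i * f (X ^ i * R) := by
  have hQ : Q = ∑ i ∈ Finset.range (Q.natDegree + 1), Q.coeff i • (X ^ i : Polynomial ℂ) := by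
    conv_lhs => rw [Polynomial.as_sum_range' Q _ (Nat.lt_succ_self _)]
    exact Finset.sum_congr rfl fun i _ => (Polynomial.smul_X_eq_monomial).symm
  conv_lhs => rw [hQ]
  rw [Finset.sum_mul, map_sum]
  exact Finset.sum_congr rfl fun i _ => by rw [smul_mul_assoc, map_smul, smul_eq_mul]

lemma coeff_lt_of_degree_lt {p : Polynomial ℂ} {ν : ℕ}
    (h : p.degree < (ν : WithBot ℕ)) {i : ℕ} (hc : p.coeff i ≠ 0) : i < ν := by
  by_contra hi
  exact hc ((Polynomial.degree_lt_iff_coeff_zero p ν).mp h i (by omega))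

lemma biorth (r : ℕ) (μ : Fin r → (Polynomial ℂ →ₗ[ℂ] ℂ))
    (P : ℕ → Polynomial ℂ) (hmonic : ∀ n, (P n).Monic) (hdeg : ∀ n, (P n).natDegree = n)
    (horth : ∀ n, TypeIISol r μ n (P n))
    (A : ℕ → Fin r → Polynomial ℂ) (hA : TypeINormalized r μ A)
    (hA0 : ∀ k : Fin r, A 0 k = 0) (m m' : ℕ) :
    ∑ k : Fin r, μ k (P m * A m' k) = if m + 1 = m' then 1 else 0 := by
  rcases Nat.eq_zero_or_pos m' with rfl | hm'
  · simp [hA0]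
  obtain ⟨hAdeg, hAorth, hAnorm⟩ := hA m' hm'
  rcases lt_trichotomy (m + 1) m' with hlt | heq | hgt
  · rw [if_neg (by omega)]
    have hex : ∀ k : Fin r, μ k (P m * A m' k)
        = ∑ i ∈ Finset.range (m + 1), (P m).coeff i * μ k (X ^ i * A m' k) := by
      intro k
      have := lin_mul_expand (μ k) (P m) (A m' k)
      rwa [hdeg] at this
    rw [Finset.sum_congr rfl fun k _ => hex k, Finset.sum_comm]
    refine Finset.sum_eq_zero fun i hi => ?_
    rw [← Finset.mul_sum, hAorth i (by have := Finset.mem_range.mp hi; omega), mul_zero]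
  · rw [if_pos heq]
    have hsplit : ∀ k : Fin r, P m * A m' k
        = X ^ m * A m' k + (P m - X ^ m) * A m' k := by intro k; ring
    simp only [hsplit, map_add, Finset.sum_add_distrib]
    have h1 : ∑ k : Fin r, μ k (X ^ m * A m' k) = 1 := by
      have hm : m' - 1 = m := by omega
      rw [← hm]; exact hAnorm
    have hR : (P m - X ^ m).degree < (m : WithBot ℕ) := by
      have h : (P m - X ^ m).degree < (P m).degree := by
        refine Polynomial.degree_sub_lt ?_ ((hmonic m).ne_zero) ?_
        · rw [Polynomial.degree_eq_natDegree (hmonic m).ne_zero, hdeg, Polynomial.degree_X_pow]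
        · rw [(hmonic m).leadingCoeff, Polynomial.leadingCoeff_X_pow]
      rwa [Polynomial.degree_eq_natDegree (hmonic m).ne_zero, hdeg] at h
    have h2 : ∑ k : Fin r, μ k ((P m - X ^ m) * A m' k) = 0 := by
      rw [Finset.sum_congr rfl fun k _ => lin_mul_expand (μ k) (P m - X ^ m) (A m' k),
        Finset.sum_comm]
      refine Finset.sum_eq_zero fun i _ => ?_
      rw [← Finset.mul_sum]
      by_cases hc : (P m - X ^ m).coeff i = 0
      · rw [hc, zero_mul]
      · have hi' : i < m := coeff_lt_of_degree_lt hR hc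
        rw [hAorth i (by omega), mul_zero]
    rw [h1, h2, add_zero]
  · rw [if_neg (by omega)]
    refine Finset.sum_eq_zero fun k _ => ?_
    rw [mul_comm, lin_mul_expand]
    refine Finset.sum_eq_zero fun i _ => ?_
    by_cases hc : (A m' k).coeff i = 0
    · rw [hc, zero_mul]
    · have hiν : i < properIndex r m' k := coeff_lt_of_degree_lt (hAdeg k) hc
      rw [(horth m).2 k i (lt_of_lt_of_le hiν (properIndex_mono r (by omega) k)), mul_zero]

lemma typeI_uniqueness (r : ℕ) (hr : 0 < r) (μ : Fin r → (Polynomial ℂ →ₗ[ℂ] ℂ))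
    (hwc : WeaklyComplete r μ) (N : ℕ) (B : Fin r → Polynomial ℂ)
    (hdegB : ∀ j : Fin r, (B j).degree < (properIndex r N j : WithBot ℕ))
    (horthB : ∀ ℓ < N, ∑ k : Fin r, μ k ((X : Polynomial ℂ) ^ ℓ * B k) = 0) :
    ∀ j, B j = 0 := by
  classical
  set ν : Fin r → ℕ := properIndex r N with hν
  let E := Polynomial.degreeLTEquiv ℂ N
  let T : (Fin N → ℂ) →ₗ[ℂ] ((Σ j : Fin r, Fin (ν j)) → ℂ) :=
    { toFun := fun c p =>
        μ p.1 (X ^ (p.2 : ℕ) * ((E.symm c : Polynomial.degreeLT ℂ N) : Polynomial ℂ))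
      map_add' := by
        intro x y; funext p
        simp [mul_add]
      map_smul' := by
        intro c x; funext p
        simp [mul_smul_comm] }
  have hker : ∀ c : Fin N → ℂ, T c = 0 → c = 0 := by
    intro c hc
    set Q : Polynomial ℂ := ((E.symm c : Polynomial.degreeLT ℂ N) : Polynomial ℂ) with hQdef
    have hQdeg : Q.degree < (N : WithBot ℕ) := Polynomial.mem_degreeLT.mp (E.symm c).2
    have hsol : TypeIISol r μ N Q := by
      refine ⟨le_of_lt hQdeg, fun j ℓ hℓ => ?_⟩
      exact congrFun hc ⟨j, ⟨ℓ, hℓ⟩⟩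
    have hQ0 : Q = 0 := by
      rcases (hwc N).1 Q hsol with h0 | hd
      · exact h0
      · by_cases hz : Q = 0
        · exact hz
        · exfalso
          rw [Polynomial.degree_eq_natDegree hz, hd] at hQdeg
          simp at hQdeg
    have hE0 : E.symm c = 0 := Subtype.ext hQ0
    have := congrArg E hE0
    simpa using this
  have hinj : Function.Injective T :=
    LinearMap.ker_eq_bot.mp (LinearMap.ker_eq_bot'.mpr hker)
  have hfr : Module.finrank ℂ (Fin N → ℂ)
      = Module.finrank ℂ ((Σ j : Fin r, Fin (ν j)) → ℂ) := by
    rw [Module.finrank_pi, Module.finrank_pi, Fintype.card_fin, Fintype.card_sigma]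
    simp only [Fintype.card_fin]
    exact (sum_properIndex r hr N).symm
  have hsurj : Function.Surjective T :=
    (LinearMap.injective_iff_surjective_of_finrank_eq_finrank hfr).mp hinj
  intro j
  have hcoeff : ∀ i : ℕ, i < ν j → (B j).coeff i = 0 := by
    intro i hi
    obtain ⟨c, hc⟩ := hsurj (fun p => if p.1 = j ∧ (p.2 : ℕ) = i then 1 else 0)
    set Q : Polynomial ℂ := ((E.symm c : Polynomial.degreeLT ℂ N) : Polynomial ℂ) with hQdef
    have hQdeg : Q.degree < (N : WithBot ℕ) := Polynomial.mem_degreeLT.mp (E.symm c).2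
    have hTval : ∀ (k : Fin r) (i' : ℕ) (hi' : i' < ν k),
        μ k (X ^ i' * Q) = if k = j ∧ i' = i then 1 else 0 := by
      intro k i' hi'
      exact congrFun hc ⟨k, ⟨i', hi'⟩⟩
    have hEval1 : ∑ k : Fin r, μ k (Q * B k) = (B j).coeff i := by
      have hterm : ∀ k : Fin r, μ k (Q * B k)
          = ∑ i' ∈ Finset.range ((B k).natDegree + 1),
              (if k = j ∧ i' = i then (B k).coeff i' else 0) := by
        intro k
        rw [mul_comm, lin_mul_expand]
        refine Finset.sum_congr rfl fun i' _ => ?_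
        by_cases hc0 : (B k).coeff i' = 0
        · simp [hc0]
        · have hlt : i' < ν k := coeff_lt_of_degree_lt (hdegB k) hc0
          rw [hTval k i' hlt]
          split_ifs <;> simp
      rw [Finset.sum_congr rfl fun k _ => hterm k]
      have hk : ∀ k : Fin r, (∑ i' ∈ Finset.range ((B k).natDegree + 1),
          (if k = j ∧ i' = i then (B k).coeff i' else 0))
          = if k = j then (B j).coeff i else 0 := by
        intro k
        by_cases hkj : k = j
        · subst hkj
          have h1 : (∑ i' ∈ Finset.range ((B k).natDegree + 1),
              if k = k ∧ i' = i then (B k).coeff i' else 0)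
              = ∑ i' ∈ Finset.range ((B k).natDegree + 1),
                if i' = i then (B k).coeff i' else 0 :=
            Finset.sum_congr rfl fun i' _ => by simp
          rw [h1, Finset.sum_ite_eq' _ i ((B k).coeff), if_pos rfl]
          by_cases hmem : i ∈ Finset.range ((B k).natDegree + 1)
          · rw [if_pos hmem]
          · rw [if_neg hmem]
            have hlt : (B k).natDegree < i := by
              by_contra h
              exact hmem (Finset.mem_range.mpr (by omega))
            exact (Polynomial.coeff_eq_zero_of_natDegree_lt hlt).symm
        · simp [hkj]
      rw [Finset.sum_congr rfl fun k _ => hk k, Finset.sum_ite_eq' Finset.univ j,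
        if_pos (Finset.mem_univ j)]
    have hEval2 : ∑ k : Fin r, μ k (Q * B k) = 0 := by
      rw [Finset.sum_congr rfl fun k _ => lin_mul_expand (μ k) Q (B k), Finset.sum_comm]
      refine Finset.sum_eq_zero fun ℓ _ => ?_
      rw [← Finset.mul_sum]
      by_cases hc0 : Q.coeff ℓ = 0
      · rw [hc0, zero_mul]
      · have hℓ : ℓ < N := by
          have h1 : (ℓ : WithBot ℕ) ≤ Q.degree := Polynomial.le_degree_of_ne_zero hc0
          have h2 : (ℓ : WithBot ℕ) < (N : WithBot ℕ) := lt_of_le_of_lt h1 hQdeg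
          exact_mod_cast h2
        rw [horthB ℓ hℓ, mul_zero]
    rw [hEval2] at hEval1
    exact hEval1.symm
  ext i : 1
  rw [Polynomial.coeff_zero]
  by_cases hi : i < ν j
  · exact hcoeff i hi
  · exact (Polynomial.degree_lt_iff_coeff_zero _ _).mp (hdegB j) i (by omega)

end AuxLemmas

/-- if the monic type II polynomials satisfy the order `r+1` recurrence with
coefficients `a_{n,j}`, then the normalized type I vector polynomials satisfy (componentwise)
`x A_n = A_{n-1} + ∑_{j=0}^{r} a_{n+j-1,j} A_{n+j}` for `n ≥ 1`, with `A_0 ≡ 0`. -/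
theorem typeI_recurrence (r : ℕ) (hr : 0 < r)
    (μ : Fin r → (Polynomial ℂ →ₗ[ℂ] ℂ)) (hwc : WeaklyComplete r μ)
    (P : ℕ → Polynomial ℂ)
    (hmonic : ∀ n, (P n).Monic) (hdeg : ∀ n, (P n).natDegree = n)
    (horth : ∀ n, TypeIISol r μ n (P n))
    (A : ℕ → Fin r → Polynomial ℂ) (hA : TypeINormalized r μ A)
    (hA0 : ∀ k : Fin r, A 0 k = 0)
    (a : ℕ → ℕ → ℂ)
    (hrec : ∀ n, X * P n = P (n + 1) +
      ∑ j ∈ Finset.range (r + 1), a n j • (if j ≤ n then P (n - j) else 0)) :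
    ∀ n, 1 ≤ n → ∀ k : Fin r,
      X * A n k = A (n - 1) k +
        ∑ j ∈ Finset.range (r + 1), a (n + j - 1) j • A (n + j) k := by
  
  intro n hn k0
  set S : Fin r → Polynomial ℂ :=
    fun k => ∑ j ∈ Finset.range (r + 1), a (n + j - 1) j • A (n + j) k with hS
  set B : Fin r → Polynomial ℂ := fun k => X * A n k - A (n - 1) k - S k with hB
  have hD : ∀ m m', ∑ k : Fin r, μ k (P m * A m' k) = if m + 1 = m' then 1 else 0 :=
    biorth r μ P hmonic hdeg horth A hA hA0
  have LP : ∀ m, ∑ k : Fin r, μ k (P m * B k) = 0 := by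
    intro m
    have hsplit : ∀ k : Fin r, μ k (P m * B k)
        = μ k ((X * P m) * A n k) - μ k (P m * A (n - 1) k) - μ k (P m * S k) := by
      intro k
      rw [show P m * B k = (X * P m) * A n k - P m * A (n - 1) k - P m * S k by
        simp only [hB]; ring, map_sub, map_sub]
    rw [Finset.sum_congr rfl fun k _ => hsplit k, Finset.sum_sub_distrib,
      Finset.sum_sub_distrib]
    have h3 : ∑ k : Fin r, μ k (P m * S k)
        = ∑ j ∈ Finset.range (r + 1), a (n + j - 1) j * (if m + 1 = n + j then 1 else 0) := by
      have hx : ∀ k : Fin r, μ k (P m * S k)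
          = ∑ j ∈ Finset.range (r + 1), a (n + j - 1) j * μ k (P m * A (n + j) k) := by
        intro k
        simp only [hS, Finset.mul_sum, map_sum, mul_smul_comm, map_smul, smul_eq_mul]
      rw [Finset.sum_congr rfl fun k _ => hx k, Finset.sum_comm]
      exact Finset.sum_congr rfl fun j _ => by rw [← Finset.mul_sum, hD m (n + j)]
    have h1 : ∑ k : Fin r, μ k ((X * P m) * A n k)
        = (if m + 1 + 1 = n then (1 : ℂ) else 0)
          + ∑ i ∈ Finset.range (r + 1),
              a m i * (if i ≤ m then (if m - i + 1 = n then (1 : ℂ) else 0) else 0) := by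
      have hx : ∀ k : Fin r, μ k ((X * P m) * A n k)
          = μ k (P (m + 1) * A n k)
            + ∑ i ∈ Finset.range (r + 1),
                a m i * μ k ((if i ≤ m then P (m - i) else 0) * A n k) := by
        intro k
        rw [hrec m, add_mul, map_add, Finset.sum_mul, map_sum]
        congr 1
        exact Finset.sum_congr rfl fun i _ => by rw [smul_mul_assoc, map_smul, smul_eq_mul]
      rw [Finset.sum_congr rfl fun k _ => hx k, Finset.sum_add_distrib, hD (m + 1) n]
      congr 1
      rw [Finset.sum_comm]
      refine Finset.sum_congr rfl fun i _ => ?_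
      rw [← Finset.mul_sum]
      congr 1
      by_cases him : i ≤ m
      · rw [if_pos him, if_pos him, hD (m - i) n]
      · rw [if_neg him, if_neg him]
        simp
    rw [h1, h3, hD m (n - 1)]
    have hmatch : (∑ i ∈ Finset.range (r + 1),
          a m i * (if i ≤ m then (if m - i + 1 = n then (1 : ℂ) else 0) else 0))
        = ∑ j ∈ Finset.range (r + 1),
            a (n + j - 1) j * (if m + 1 = n + j then 1 else 0) := by
      refine Finset.sum_congr rfl fun i _ => ?_
      by_cases hc : m + 1 = n + i
      · have hi_le : i ≤ m := by omega
        have h2 : m - i + 1 = n := by omega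
        have h4 : n + i - 1 = m := by omega
        rw [if_pos hc, if_pos hi_le, if_pos h2, h4]
      · rw [if_neg hc, mul_zero]
        by_cases hi_le : i ≤ m
        · rw [if_pos hi_le, if_neg (fun h => hc (by omega)), mul_zero]
        · rw [if_neg hi_le, mul_zero]
    rw [hmatch]
    have hif : (if m + 1 + 1 = n then (1 : ℂ) else 0)
        = (if m + 1 = n - 1 then 1 else 0) := by
      have hiff : (m + 1 + 1 = n) ↔ (m + 1 = n - 1) := by omega
      by_cases hcc : m + 1 + 1 = n
      · rw [if_pos hcc, if_pos (hiff.mp hcc)]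
      · rw [if_neg hcc, if_neg (fun h => hcc (hiff.mpr h))]
    rw [hif]
    ring
  have Lzero : ∀ Q : Polynomial ℂ, ∑ k : Fin r, μ k (Q * B k) = 0 := by
    have key : ∀ d, ∀ Q : Polynomial ℂ, Q.natDegree ≤ d →
        ∑ k : Fin r, μ k (Q * B k) = 0 := by
      intro d
      induction d with
      | zero =>
        intro Q hQ
        have hP0 : P 0 = 1 := (hmonic 0).natDegree_eq_zero.mp (hdeg 0)
        have hQc : Q = Q.coeff 0 • P 0 := by
          rw [hP0, Polynomial.smul_eq_C_mul, mul_one]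
          exact Polynomial.eq_C_of_natDegree_le_zero hQ
        calc ∑ k : Fin r, μ k (Q * B k)
            = ∑ k : Fin r, Q.coeff 0 * μ k (P 0 * B k) := by
              refine Finset.sum_congr rfl fun k _ => ?_
              conv_lhs => rw [hQc]
              rw [smul_mul_assoc, map_smul, smul_eq_mul]
          _ = 0 := by rw [← Finset.mul_sum, LP 0, mul_zero]
      | succ d ih =>
        intro Q hQ
        by_cases hle : Q.natDegree ≤ d
        · exact ih Q hle
        have hQd : Q.natDegree = d + 1 := by omega
        have hQne : Q ≠ 0 := fun h => by
          rw [h, Polynomial.natDegree_zero] at hQd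
          exact absurd hQd (by omega)
        have hcne : Q.leadingCoeff ≠ 0 := Polynomial.leadingCoeff_ne_zero.mpr hQne
        set R : Polynomial ℂ := Q - Polynomial.C Q.leadingCoeff * P (d + 1) with hRdef
        have hdegCP : (Polynomial.C Q.leadingCoeff * P (d + 1)).degree
            = ((d + 1 : ℕ) : WithBot ℕ) := by
          rw [Polynomial.degree_C_mul hcne,
            Polynomial.degree_eq_natDegree (hmonic (d + 1)).ne_zero, hdeg]
        have hdegR : R.degree < Q.degree := by
          refine Polynomial.degree_sub_lt ?_ hQne ?_
          · rw [hdegCP, Polynomial.degree_eq_natDegree hQne, hQd]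
          · rw [Polynomial.leadingCoeff_mul, Polynomial.leadingCoeff_C,
              (hmonic (d + 1)).leadingCoeff, mul_one]
        have hRd : R.natDegree ≤ d := by
          by_cases hR0 : R = 0
          · simp [hR0]
          · have := Polynomial.natDegree_lt_natDegree hR0 hdegR
            omega
        have hQsplit : Q = Polynomial.C Q.leadingCoeff * P (d + 1) + R := by
          rw [hRdef]; ring
        calc ∑ k : Fin r, μ k (Q * B k)
            = ∑ k : Fin r, (Q.leadingCoeff * μ k (P (d + 1) * B k) + μ k (R * B k)) := by
              refine Finset.sum_congr rfl fun k _ => ?_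
              conv_lhs => rw [hQsplit]
              rw [add_mul, map_add, ← Polynomial.smul_eq_C_mul, smul_mul_assoc,
                map_smul, smul_eq_mul]
          _ = 0 := by
              rw [Finset.sum_add_distrib, ← Finset.mul_sum, LP (d + 1),
                Finset.sum_congr rfl fun k _ => rfl, ih R hRd, mul_zero, add_zero]
    intro Q
    exact key Q.natDegree Q le_rfl
  have hdegA : ∀ (m' : ℕ) (k : Fin r),
      (A m' k).degree < (properIndex r m' k : WithBot ℕ) := by
    intro m' k
    rcases Nat.eq_zero_or_pos m' with rfl | h
    · rw [hA0 k, Polynomial.degree_zero]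
      exact WithBot.bot_lt_coe _
    · exact (hA m' h).1 k
  have hcz : ∀ (m' : ℕ) (k : Fin r) (m : ℕ), properIndex r m' k ≤ m →
      (A m' k).coeff m = 0 := by
    intro m' k m hm
    refine Polynomial.coeff_eq_zero_of_degree_lt (lt_of_lt_of_le (hdegA m' k) ?_)
    exact_mod_cast hm
  have hdegB : ∀ k : Fin r, (B k).degree < (properIndex r (n + r) k : WithBot ℕ) := by
    intro k
    rw [Polynomial.degree_lt_iff_coeff_zero]
    intro m hm
    rw [properIndex_add_r r hr n k] at hm
    have c1 : (X * A n k).coeff m = 0 := by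
      rw [show m = (m - 1) + 1 by omega, Polynomial.coeff_X_mul]
      exact hcz n k (m - 1) (by omega)
    have c2 : (A (n - 1) k).coeff m = 0 :=
      hcz (n - 1) k m (le_trans (properIndex_mono r (show n - 1 ≤ n by omega) k) (by omega))
    have c3 : (S k).coeff m = 0 := by
      simp only [hS, Polynomial.finset_sum_coeff, Polynomial.coeff_smul, smul_eq_mul]
      refine Finset.sum_eq_zero fun j hj => ?_
      have hj' : j ≤ r := by have := Finset.mem_range.mp hj; omega
      have hle : properIndex r (n + j) k ≤ m :=
        le_trans (properIndex_mono r (show n + j ≤ n + r by omega) k)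
          (by rw [properIndex_add_r r hr n k]; omega)
      rw [hcz (n + j) k m hle, mul_zero]
    simp only [hB, Polynomial.coeff_sub, c1, c2, c3, sub_zero, zero_sub, neg_zero]
  have hB0 : ∀ k, B k = 0 :=
    typeI_uniqueness r hr μ hwc (n + r) B hdegB (fun ℓ _ => Lzero (X ^ ℓ))
  have hfin := hB0 k0
  simp only [hB, hS] at hfin
  linear_combination hfin
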